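/- arXiv:0712.4341 — 3 statements merged into one kernel-verified Lean document; each statement's English description precedes it below -/
import Mathlib

section
/- An l-valued language A : Σ* → l is l-regular if and only if there exist m ≥ 0, elements k₁,…,kₘ ∈ l∖{0}, and pairwise disjoint (classical) regular languages L₁,…,Lₘ ⊆ Σ* such that A = ⋁_{i=1}^m kᵢ·1_{Lᵢ}, where (k·1_L)(ω) = k if ω ∈ L and 0 otherwise. -/
/-- A complete orthomodular lattice. -/
class OrthomodularCompleteLattice (α : Type*) extends CompleteLattice α, Compl α where
  inf_compl_self : ∀ a : α, a ⊓ aᶜ = ⊥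
  sup_compl_self : ∀ a : α, a ⊔ aᶜ = ⊤
  compl_compl' : ∀ a : α, aᶜᶜ = a
  compl_antitone : ∀ a b : α, a ≤ b → bᶜ ≤ aᶜ
  orthomodular : ∀ a b : α, a ≤ b → b = a ⊔ (aᶜ ⊓ b)

/-- An `l`-valued finite automaton (`l`-VFA). -/
structure LVFA (Q A l : Type*) where
  δ : Q → A → Q → l
  init : Q → l
  final : Q → l

/-- The `l`-valued language recognized by an `l`-VFA. -/
def lvfaLang {Q A l : Type*} [OrthomodularCompleteLattice l] (M : LVFA Q A l)
    (w : List A) : l :=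
  ⨆ path : Fin (w.length + 1) → Q,
    M.init (path 0) ⊓
      (⨅ i : Fin w.length, M.δ (path i.castSucc) (w.get i) (path i.succ)) ⊓
      M.final (path (Fin.last w.length))

/-- An `l`-valued deterministic finite automaton (`l`-VDFA). -/
structure LVDFA (Q A l : Type*) where
  next : Q → A → Q
  start : Q
  final : Q → l

/-- The `l`-valued language recognized by an `l`-VDFA. -/
def lvdfaLang {Q A l : Type*} (M : LVDFA Q A l) (w : List A) : l :=
  M.final (w.foldl M.next M.start)

/-- An `l`-valued finite automaton with ε-moves (`ε` is encoded as `none`). -/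
structure LVFAe (Q A l : Type*) where
  δ : Q → Option A → Q → l
  init : Q → l
  final : Q → l

/-- The `l`-valued language recognized by an `l`-VFA with ε-moves. -/
def lvfaeLang {Q A l : Type*} [OrthomodularCompleteLattice l] (M : LVFAe Q A l)
    (w : List A) : l :=
  ⨆ n : ℕ, ⨆ τ : Fin n → Option A, ⨆ _ : (List.ofFn τ).reduceOption = w,
    ⨆ path : Fin (n + 1) → Q,
      M.init (path 0) ⊓
        (⨅ i : Fin n, M.δ (path i.castSucc) (τ i) (path i.succ)) ⊓
        M.final (path (Fin.last n))

/-- An `l`-valued language is `l`-regular if it is recognized by some `l`-VFA. -/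
def IsLRegular {A l : Type*} [OrthomodularCompleteLattice l] (f : List A → l) : Prop :=
  ∃ (Q : Type) (_ : Fintype Q) (M : LVFA Q A l), ∀ w, lvfaLang M w = f w

section Helpers

variable {Q A l : Type*} [OrthomodularCompleteLattice l]

lemma iInf_fin_snoc {n : ℕ} (f : Fin (n + 1) → l) :
    (⨅ i, f i) = (⨅ i : Fin n, f i.castSucc) ⊓ f (Fin.last n) := by
  apply le_antisymm
  · exact le_inf (le_iInf fun i => iInf_le _ _) (iInf_le _ _)
  · refine le_iInf fun i => ?_
    induction i using Fin.lastCases with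
    | last => exact inf_le_right
    | cast i => exact inf_le_left.trans (iInf_le _ i)

lemma iInf_fin_succ {n : ℕ} (f : Fin (n + 1) → l) :
    (⨅ i, f i) = f 0 ⊓ ⨅ i : Fin n, f i.succ := by
  apply le_antisymm
  · exact le_inf (iInf_le _ _) (le_iInf fun i => iInf_le _ _)
  · refine le_iInf fun i => ?_
    induction i using Fin.cases with
    | zero => exact inf_le_left
    | succ i => exact inf_le_right.trans (iInf_le _ i)

/-- One step of the "set of accumulated path weights" computation. -/
def stepSet (M : LVFA Q A l) (S : Q → Set l) (a : A) : Q → Set l :=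
  fun q' => { x | ∃ q, ∃ y ∈ S q, x = y ⊓ M.δ q a q' }

def initSet (M : LVFA Q A l) : Q → Set l := fun q => {M.init q}

/-- Set of path weights of runs on `w` ending at `q`, with initial weight drawn from `S`. -/
def WS (M : LVFA Q A l) (S : Q → Set l) (w : List A) (q : Q) : Set l :=
  { x | ∃ path : Fin (w.length + 1) → Q, path (Fin.last w.length) = q ∧
      ∃ y ∈ S (path 0),
        x = y ⊓ ⨅ i : Fin w.length, M.δ (path i.castSucc) (w.get i) (path i.succ) }

lemma WS_nil (M : LVFA Q A l) (S : Q → Set l) (q : Q) : WS M S [] q = S q := by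
  haveI : IsEmpty (Fin ([] : List A).length) := Fin.isEmpty'
  ext x
  simp only [WS, Set.mem_setOf_eq]
  constructor
  · rintro ⟨path, hq, y, hy, rfl⟩
    have h0 : (0 : Fin (([] : List A).length + 1)) = Fin.last ([] : List A).length := rfl
    rw [iInf_of_isEmpty, sInf_empty, inf_top_eq]
    rw [h0, hq] at hy; exact hy
  · intro hx
    exact ⟨fun _ => q, rfl, x, hx, by rw [iInf_of_isEmpty, sInf_empty, inf_top_eq]⟩

lemma iInf_cons_aux (M : LVFA Q A l) (a : A) (w : List A) (p : Fin (w.length + 1 + 1) → Q) :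
    (⨅ i : Fin (w.length + 1), M.δ (p i.castSucc) ((a :: w).get i) (p i.succ)) =
      M.δ (p 0) a (p 1) ⊓
        ⨅ i : Fin w.length, M.δ ((p ∘ Fin.succ) i.castSucc) (w.get i) ((p ∘ Fin.succ) i.succ) := by
  rw [iInf_fin_succ (fun i : Fin (w.length + 1) =>
    M.δ (p i.castSucc) ((a :: w).get i) (p i.succ))]
  simp [Function.comp]

lemma WS_cons (M : LVFA Q A l) (S : Q → Set l) (a : A) (w : List A) (q : Q) :
    WS M S (a :: w) q = WS M (stepSet M S a) w q := by
  ext x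
  simp only [WS, Set.mem_setOf_eq, List.length_cons]
  constructor
  · rintro ⟨p, hlast, y, hy, rfl⟩
    refine ⟨p ∘ Fin.succ, ?_, y ⊓ M.δ (p 0) a (p 1), ⟨p 0, y, hy, rfl⟩, ?_⟩
    · show p (Fin.last w.length).succ = q
      rw [Fin.succ_last]; exact hlast
    · rw [iInf_cons_aux M a w p, ← inf_assoc]
  · rintro ⟨p', hlast, y', ⟨q0, y, hy, rfl⟩, rfl⟩
    refine ⟨Fin.cons q0 p', ?_, y, ?_, ?_⟩
    · rw [← Fin.succ_last, Fin.cons_succ]; exact hlast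
    · rw [Fin.cons_zero]; exact hy
    · rw [iInf_cons_aux M a w (Fin.cons q0 p'), ← inf_assoc]
      have h0 : (Fin.cons q0 p' : Fin (w.length + 1 + 1) → Q) 0 = q0 := Fin.cons_zero _ _
      have h1 : (Fin.cons q0 p' : Fin (w.length + 1 + 1) → Q) 1 = p' 0 := Fin.cons_succ _ _ 0
      have h2 : (Fin.cons q0 p' : Fin (w.length + 1 + 1) → Q) ∘ Fin.succ = p' := by
        funext i; exact Fin.cons_succ _ _ i
      rw [h0, h1, h2]

lemma WS_foldl (M : LVFA Q A l) (w : List A) :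
    ∀ S : Q → Set l, WS M S w = List.foldl (stepSet M) S w := by
  induction w with
  | nil => intro S; funext q; simpa using WS_nil M S q
  | cons a w ih =>
    intro S
    funext q
    rw [List.foldl_cons, ← ih (stepSet M S a)]
    exact WS_cons M S a w q

/-- The accumulated path-weight sets after reading `w`. -/
def runSets (M : LVFA Q A l) (w : List A) : Q → Set l :=
  List.foldl (stepSet M) (initSet M) w

lemma lvfaLang_eq_runSets (M : LVFA Q A l) (w : List A) :
    lvfaLang M w = ⨆ q, ⨆ x ∈ runSets M w q, x ⊓ M.final q := by
  have h : ∀ q, runSets M w q = WS M (initSet M) w q := by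
    intro q; rw [WS_foldl]; rfl
  simp only [h]
  apply le_antisymm
  · refine iSup_le fun path => ?_
    refine le_iSup_of_le (path (Fin.last w.length)) ?_
    exact le_iSup₂_of_le _ ⟨path, rfl, M.init (path 0), rfl, rfl⟩ le_rfl
  · refine iSup_le fun q => iSup₂_le fun x hx => ?_
    obtain ⟨path, hq, y, hy, rfl⟩ := hx
    obtain rfl : M.init (path 0) = y := hy.symm
    refine le_iSup_of_le path ?_
    rw [hq]

end Helpers

section Det

variable {Q A l : Type*} [OrthomodularCompleteLattice l]

/-- The `l`-VFA obtained from an `l`-VDFA. -/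
def detLVFA [DecidableEq Q] (N : LVDFA Q A l) : LVFA Q A l where
  δ q a q' := if q' = N.next q a then ⊤ else ⊥
  init q := if q = N.start then ⊤ else ⊥
  final := N.final

lemma det_invariant [DecidableEq Q] (N : LVDFA Q A l) (w : List A) :
    ∀ (S : Q → Set l) (s : Q),
      (∀ q, ∀ x ∈ S q, x = ⊥ ∨ (x = ⊤ ∧ q = s)) → ⊤ ∈ S s →
      (∀ q, ∀ x ∈ List.foldl (stepSet (detLVFA N)) S w q,
          x = ⊥ ∨ (x = ⊤ ∧ q = w.foldl N.next s)) ∧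
        ⊤ ∈ List.foldl (stepSet (detLVFA N)) S w (w.foldl N.next s) := by
  induction w with
  | nil => intro S s h1 h2; exact ⟨h1, h2⟩
  | cons a w ih =>
    intro S s h1 h2
    refine ih (stepSet (detLVFA N) S a) (N.next s a) ?_ ?_
    · rintro q' x ⟨q, y, hy, rfl⟩
      rcases h1 q y hy with rfl | ⟨rfl, rfl⟩
      · exact Or.inl (by simp)
      · by_cases h : q' = N.next q a
        · refine Or.inr ⟨?_, h⟩
          simp [detLVFA, h]
        · refine Or.inl ?_
          simp [detLVFA, h]
    · exact ⟨s, ⊤, h2, by simp [detLVFA]⟩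

lemma lvfaLang_detLVFA [DecidableEq Q] (N : LVDFA Q A l) (w : List A) :
    lvfaLang (detLVFA N) w = lvdfaLang N w := by
  rw [lvfaLang_eq_runSets]
  have hinit1 : ∀ q, ∀ x ∈ initSet (detLVFA N) q, x = ⊥ ∨ (x = ⊤ ∧ q = N.start) := by
    intro q x hx
    rw [initSet, Set.mem_singleton_iff] at hx
    subst hx
    by_cases h : q = N.start
    · exact Or.inr ⟨by simp [detLVFA, h], h⟩
    · exact Or.inl (by simp [detLVFA, h])
  have hinit2 : ⊤ ∈ initSet (detLVFA N) N.start := by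
    simp [initSet, detLVFA]
  obtain ⟨h1, h2⟩ := det_invariant N w (initSet (detLVFA N)) N.start hinit1 hinit2
  apply le_antisymm
  · refine iSup_le fun q => iSup₂_le fun x hx => ?_
    rcases h1 q x hx with rfl | ⟨rfl, rfl⟩
    · simp [lvdfaLang]
    · simp [lvdfaLang, detLVFA]
  · have : lvdfaLang N w = ⊤ ⊓ (detLVFA N).final (w.foldl N.next N.start) := by
      simp [lvdfaLang, detLVFA]
    rw [this]
    exact le_iSup_of_le (w.foldl N.next N.start) (le_iSup₂_of_le ⊤ h2 le_rfl)

lemma isLRegular_lvdfaLang {Q : Type} [Fintype Q] {A l : Type*}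
    [OrthomodularCompleteLattice l] (N : LVDFA Q A l) :
    IsLRegular (lvdfaLang N) := by
  classical
  exact ⟨Q, inferInstance, detLVFA N, fun w => lvfaLang_detLVFA N w⟩

end Det

section Mpr

variable {l A : Type*} [OrthomodularCompleteLattice l]

lemma isLRegular_of_decomp {m : ℕ} (k : Fin m → l) (L : Fin m → Language A)
    (hreg : ∀ i, (L i).IsRegular) (f : List A → l)
    (hf : ∀ w : List A, f w = ⨆ i, ⨆ _ : w ∈ L i, k i) : IsLRegular f := by
  classical
  choose σ hfin MD hMD using hreg
  letI : ∀ i, Fintype (σ i) := hfin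
  let Qp : Type := ∀ i, σ i
  letI : Fintype Qp := by infer_instance
  let N : LVDFA Qp A l :=
    { next := fun q a i => (MD i).step (q i) a
      start := fun i => (MD i).start
      final := fun q => ⨆ i, ⨆ _ : q i ∈ (MD i).accept, k i }
  have hfold : ∀ (w : List A) (q : Qp) (i : Fin m),
      (List.foldl N.next q w) i = (MD i).evalFrom (q i) w := by
    intro w
    induction w with
    | nil => intro q i; rfl
    | cons a w ih => intro q i; exact ih (N.next q a) i
  have key : ∀ w, lvdfaLang N w = f w := by
    intro w
    have hmem : ∀ i : Fin m,
        ((List.foldl N.next N.start w) i ∈ (MD i).accept) = (w ∈ L i) := by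
      intro i
      rw [hfold w N.start i]
      have : (MD i).evalFrom ((N.start : Qp) i) w = (MD i).eval w := rfl
      rw [this]
      exact propext (((MD i).mem_accepts).symm.trans (by rw [hMD i]))
    show N.final (List.foldl N.next N.start w) = f w
    rw [hf w]
    exact iSup_congr fun i => by rw [hmem i]
  obtain ⟨Q', hQ', M', hM'⟩ := isLRegular_lvdfaLang N
  exact ⟨Q', hQ', M', fun w => (hM' w).trans (key w)⟩

end Mpr

section Mp

variable {l A : Type*} [OrthomodularCompleteLattice l] [Fintype A]

lemma decomp_of_isLRegular (f : List A → l) (h : IsLRegular f) :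
    ∃ (m : ℕ) (k : Fin m → l) (L : Fin m → Language A),
      (∀ i, k i ≠ ⊥) ∧ (∀ i, (L i).IsRegular) ∧
      (∀ i j, i ≠ j → ∀ w : List A, w ∈ L i → w ∉ L j) ∧
      ∀ w : List A, f w = ⨆ i, ⨆ _ : w ∈ L i, k i := by
  classical
  obtain ⟨Q, hQ, M, hM⟩ := h
  letI := hQ
  let S0 : Finset l :=
    (Finset.univ.image fun q : Q => M.init q) ∪
      (Finset.univ.image fun x : Q × A × Q => M.δ x.1 x.2.1 x.2.2)
  let T0 : Finset l := S0.powerset.image fun s => s.inf id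
  have hinitT : ∀ q : Q, M.init q ∈ T0 := by
    intro q
    refine Finset.mem_image.2 ⟨{M.init q}, ?_, ?_⟩
    · simp only [Finset.mem_powerset, Finset.singleton_subset_iff]
      exact Finset.mem_union_left _ (Finset.mem_image_of_mem _ (Finset.mem_univ q))
    · simp
  have hstepT : ∀ x ∈ T0, ∀ (q : Q) (a : A) (q' : Q), x ⊓ M.δ q a q' ∈ T0 := by
    intro x hx q a q'
    obtain ⟨s, hs, rfl⟩ := Finset.mem_image.1 hx
    rw [Finset.mem_powerset] at hs
    refine Finset.mem_image.2 ⟨insert (M.δ q a q') s, ?_, ?_⟩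
    · rw [Finset.mem_powerset, Finset.insert_subset_iff]
      exact ⟨Finset.mem_union_right _
        (Finset.mem_image.2 ⟨(q, a, q'), Finset.mem_univ _, rfl⟩), hs⟩
    · rw [Finset.inf_insert]
      exact inf_comm _ _
  let P := Q → Set {x // x ∈ T0}
  letI : Fintype P := by infer_instance
  let nxt : P → A → P := fun p a q' => {u | ∃ q, ∃ v ∈ p q, (u : l) = (v : l) ⊓ M.δ q a q'}
  let st : P := fun q => {u | (u : l) = M.init q}
  have hrel : ∀ (w : List A) (p : P) (S : Q → Set l),
      (∀ q, Subtype.val '' p q = S q) →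
      ∀ q, Subtype.val '' (List.foldl nxt p w q) = List.foldl (stepSet M) S w q := by
    intro w
    induction w with
    | nil => intro p S h q; exact h q
    | cons a w ih =>
      intro p S h q
      refine ih (nxt p a) (stepSet M S a) ?_ q
      intro q'
      ext x
      constructor
      · rintro ⟨u, ⟨q0, v, hv, hu⟩, rfl⟩
        exact ⟨q0, (v : l), (h q0) ▸ ⟨v, hv, rfl⟩, hu⟩
      · rintro ⟨q0, y, hy, rfl⟩
        rw [← h q0] at hy
        obtain ⟨v, hv, rfl⟩ := hy
        exact ⟨⟨(v : l) ⊓ M.δ q0 a q', hstepT _ v.2 q0 a q'⟩, ⟨q0, v, hv, rfl⟩, rfl⟩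
  have hst : ∀ q, Subtype.val '' st q = initSet M q := by
    intro q
    ext x
    simp only [initSet, Set.mem_singleton_iff]
    constructor
    · rintro ⟨u, hu, rfl⟩; exact hu
    · rintro rfl; exact ⟨⟨M.init q, hinitT q⟩, rfl, rfl⟩
  let F : P → l := fun p => ⨆ q, ⨆ u ∈ p q, (u : l) ⊓ M.final q
  have hF : ∀ w, f w = F (List.foldl nxt st w) := by
    intro w
    rw [← hM w, lvfaLang_eq_runSets]
    refine iSup_congr fun q => ?_
    rw [runSets, ← hrel w st (initSet M) hst q]
    exact iSup_image
  let e : P ≃ Fin (Fintype.card P) := Fintype.equivFin P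
  let step' : Fin (Fintype.card P) → A → Fin (Fintype.card P) :=
    fun s a => e (nxt (e.symm s) a)
  have heval : ∀ (w : List A) (p : P),
      List.foldl step' (e p) w = e (List.foldl nxt p w) := by
    intro w
    induction w with
    | nil => intro p; rfl
    | cons a w ih =>
      intro p
      show List.foldl step' (step' (e p) a) w = _
      rw [show step' (e p) a = e (nxt p a) by simp [step']]
      exact ih (nxt p a)
  let Snz := {p : P // F p ≠ ⊥}
  letI : Fintype Snz := by infer_instance
  let idx : Fin (Fintype.card Snz) ≃ Snz := (Fintype.equivFin Snz).symm
  refine ⟨Fintype.card Snz, fun i => F (idx i).1,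
    fun i => {w | List.foldl nxt st w = (idx i).1}, fun i => (idx i).2, ?_, ?_, ?_⟩
  · intro i
    refine ⟨Fin (Fintype.card P), inferInstance,
      ⟨step', e st, {s | s = e (idx i).1}⟩, ?_⟩
    ext w
    rw [DFA.mem_accepts]
    show List.foldl step' (e st) w ∈ _ ↔ _
    rw [heval w st]
    show e (List.foldl nxt st w) = e (idx i).1 ↔ _
    rw [e.apply_eq_iff_eq]
    rfl
  · intro i j hij w hwi hwj
    have h1 : List.foldl nxt st w = (idx i).1 := hwi
    have h2 : List.foldl nxt st w = (idx j).1 := hwj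
    exact hij (idx.injective (Subtype.ext (h1 ▸ h2)))
  · intro w
    rw [hF w]
    by_cases hp : F (List.foldl nxt st w) = ⊥
    · rw [hp]
      refine le_antisymm bot_le (iSup_le fun i => iSup_le fun hw => ?_)
      have h1 : List.foldl nxt st w = (idx i).1 := hw
      rw [h1] at hp
      exact ((idx i).2 hp).elim
    · set p := List.foldl nxt st w with hpdef
      let i0 := idx.symm ⟨p, hp⟩
      have hi0 : (idx i0).1 = p := by simp [i0]
      have hwi0 : w ∈ {w | List.foldl nxt st w = (idx i0).1} := hi0.symm
      apply le_antisymm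
      · rw [show F p = F (idx i0).1 by rw [hi0]]
        exact le_iSup_of_le i0 (le_iSup_of_le hwi0 le_rfl)
      · refine iSup_le fun i => iSup_le fun hw => ?_
        have h1 : p = (idx i).1 := hw
        refine le_of_eq ?_
        show F (idx i).1 = F p
        rw [← h1]

end Mp

/-- An `l`-valued language is `l`-regular iff it is a finite join of scalar multiples of
characteristic functions of pairwise disjoint classical regular languages. -/
theorem lregular_iff_disjoint_step {l A : Type*} [OrthomodularCompleteLattice l] [Fintype A]
    (f : List A → l) :
    IsLRegular f ↔
      ∃ (m : ℕ) (k : Fin m → l) (L : Fin m → Language A),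
        (∀ i, k i ≠ ⊥) ∧ (∀ i, (L i).IsRegular) ∧
        (∀ i j, i ≠ j → ∀ w : List A, w ∈ L i → w ∉ L j) ∧
        ∀ w : List A, f w = ⨆ i, ⨆ _ : w ∈ L i, k i := by
  constructor
  · exact decomp_of_isLRegular f
  · rintro ⟨m, k, L, hk, hreg, hdisj, hf⟩
    exact isLRegular_of_decomp k L hreg f hf
end

section
/- An l-valued language A : Σ* → l is l-regular if and only if the image set Im(A) is finite, for every r ∈ Im(A)∖{0} the cut A_r = { ω ∈ Σ* : A(ω) ≥ r } is a (classical) regular language, and A = ⋁_{r ∈ Im(A)∖{0}} r·1_{A_r}. -/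
section Aux
open scoped Classical

variable {l : Type*} [OrthomodularCompleteLattice l] {A : Type*}

private lemma fin_iInf_succ {n : ℕ} (h : Fin (n+1) → l) :
    ⨅ i, h i = h 0 ⊓ ⨅ i : Fin n, h i.succ := by
  apply le_antisymm
  · exact le_inf (iInf_le _ 0) (le_iInf fun i => iInf_le _ _)
  · refine le_iInf fun i => ?_
    refine Fin.cases ?_ ?_ i
    · exact inf_le_left
    · exact fun j => le_trans inf_le_right (iInf_le _ j)


private lemma foldl_take_succ {α β : Type*} (g : β → α → β) (s : β) (w : List α)
    (i : Fin w.length) :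
    (w.take (i+1)).foldl g s = g ((w.take i).foldl g s) (w.get i) := by
  rw [List.take_succ, List.getElem?_eq_getElem i.isLt]
  simp only [Option.toList_some, List.foldl_append, List.foldl_cons, List.foldl_nil,
    List.get_eq_getElem]




open scoped Classical in
private noncomputable def LVDFA.toLVFA {Q : Type*} (N : LVDFA Q A l) : LVFA Q A l where
  δ q a q' := if q' = N.next q a then ⊤ else ⊥
  init q := if q = N.start then ⊤ else ⊥
  final := N.final

private lemma lvdfa_toLVFA_lang {Q : Type*} (N : LVDFA Q A l) (w : List A) :
    lvfaLang N.toLVFA w = lvdfaLang N w := by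
  have hcan : ∀ (path : Fin (w.length + 1) → Q), path 0 = N.start →
      (∀ i : Fin w.length, path i.succ = N.next (path i.castSucc) (w.get i)) →
      ∀ k : ℕ, (hk : k ≤ w.length) →
        path ⟨k, Nat.lt_succ_of_le hk⟩ = (w.take k).foldl N.next N.start := by
    intro path h0 hs k
    induction k with
    | zero => intro hk; simpa using h0
    | succ k ih =>
      intro hk
      have hk' : k < w.length := hk
      rw [foldl_take_succ N.next N.start w ⟨k, hk'⟩, ← ih (le_of_lt hk')]
      have := hs ⟨k, hk'⟩
      simpa [Fin.succ, Fin.castSucc, Fin.castAdd, Fin.castLE] using this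
  apply le_antisymm
  · refine iSup_le fun path => ?_
    by_cases h0 : path 0 = N.start
    · by_cases hs : ∀ i : Fin w.length, path i.succ = N.next (path i.castSucc) (w.get i)
      · have hlast : path (Fin.last w.length) = w.foldl N.next N.start := by
          have := hcan path h0 hs w.length le_rfl
          simpa [Fin.last, List.take_length] using this
        refine le_trans inf_le_right ?_
        rw [hlast]; exact le_rfl
      · push_neg at hs
        obtain ⟨i, hi⟩ := hs
        have hbot : N.toLVFA.δ (path i.castSucc) (w.get i) (path i.succ) = ⊥ := if_neg hi
        refine le_trans (le_trans inf_le_left inf_le_right) ?_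
        exact le_trans (iInf_le _ i) (by rw [hbot]; exact bot_le)
    · have hbot : N.toLVFA.init (path 0) = ⊥ := if_neg h0
      refine le_trans (le_trans inf_le_left inf_le_left) ?_
      rw [hbot]; exact bot_le
  · set c : Fin (w.length + 1) → Q := fun k => (w.take k).foldl N.next N.start with hc
    have h0 : c 0 = N.start := by simp [hc]
    have hs : ∀ i : Fin w.length, c i.succ = N.next (c i.castSucc) (w.get i) := by
      intro i
      have := foldl_take_succ N.next N.start w i
      simpa [hc, Fin.succ, Fin.castSucc, Fin.castAdd, Fin.castLE] using this
    refine le_trans ?_ (le_iSup _ c)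
    have h1 : N.toLVFA.init (c 0) = ⊤ := if_pos h0
    have h2 : ∀ i : Fin w.length,
        N.toLVFA.δ (c i.castSucc) (w.get i) (c i.succ) = ⊤ := fun i => if_pos (hs i)
    have hlast : c (Fin.last w.length) = w.foldl N.next N.start := by
      simp [hc, Fin.last, List.take_length]
    rw [h1, hlast]
    simp only [h2, iInf_top, inf_top_eq, top_inf_eq]
    exact le_rfl

private def lstep {Q : Type*} (M : LVFA Q A l) (S : Set (Q × l)) (a : A) : Set (Q × l) :=
  {p | ∃ x ∈ S, p.2 = x.2 ⊓ M.δ x.1 a p.1}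

private def linit {Q : Type*} (M : LVFA Q A l) : Set (Q × l) := {p | p.2 = M.init p.1}

private lemma foldl_lstep_eq {Q : Type*} (M : LVFA Q A l) (w : List A) : ∀ (S : Set (Q × l)),
    w.foldl (lstep M) S = {p | ∃ (path : Fin (w.length + 1) → Q) (v : l),
      (path 0, v) ∈ S ∧ p = (path (Fin.last w.length),
        v ⊓ ⨅ i : Fin w.length, M.δ (path i.castSucc) (w.get i) (path i.succ))} := by
  induction w with
  | nil =>
    intro S
    ext p
    simp only [List.foldl_nil, List.length_nil, Set.mem_setOf_eq]
    constructor
    · intro hp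
      refine ⟨fun _ => p.1, p.2, ?_, ?_⟩
      · simpa using hp
      · simp
    · rintro ⟨path, v, hv, rfl⟩
      simpa using hv
  | cons a w ih =>
    intro S
    have hfold : (a :: w).foldl (lstep M) S = w.foldl (lstep M) (lstep M S a) := rfl
    rw [hfold, ih]
    ext p
    simp only [Set.mem_setOf_eq, List.length_cons]
    constructor
    · rintro ⟨path, v, hv, rfl⟩
      obtain ⟨x, hx, hveq⟩ := hv
      have hveq' : v = x.2 ⊓ M.δ x.1 a (path 0) := hveq
      refine ⟨Fin.cases x.1 path, x.2, ?_, ?_⟩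
      · simpa using hx
      · have hlast : (Fin.cases x.1 path : Fin (w.length + 2) → Q) (Fin.last (w.length + 1))
            = path (Fin.last w.length) := by
          rw [← Fin.succ_last]; exact Fin.cases_succ _
        have hsplit : (⨅ i : Fin (w.length + 1),
            M.δ ((Fin.cases x.1 path : Fin (w.length+2) → Q) i.castSucc) ((a :: w).get i)
              ((Fin.cases x.1 path : Fin (w.length+2) → Q) i.succ))
            = M.δ x.1 a (path 0) ⊓ ⨅ i : Fin w.length,
                M.δ (path i.castSucc) (w.get i) (path i.succ) := by
          rw [fin_iInf_succ]
          exact congr_arg₂ (· ⊓ ·) (by simp [Fin.cases_succ]; rw [← Fin.succ_zero_eq_one, Fin.cases_succ])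
            (iInf_congr fun i => by
              simp only [← Fin.succ_castSucc, Fin.cases_succ] <;> rfl)
        rw [hlast, hsplit, hveq', inf_assoc]
    · rintro ⟨path, v, hv, rfl⟩
      refine ⟨fun i => path i.succ, v ⊓ M.δ (path 0) a (path 1), ⟨(path 0, v), hv, rfl⟩, ?_⟩
      have hlast : path (Fin.last (w.length + 1)) = (fun i : Fin (w.length+1) => path i.succ)
          (Fin.last w.length) := by rw [← Fin.succ_last]
      have hsplit : (⨅ i : Fin (w.length + 1),
          M.δ (path i.castSucc) ((a :: w).get i) (path i.succ))
          = M.δ (path 0) a (path 1) ⊓ ⨅ i : Fin w.length,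
              M.δ (path i.castSucc.succ) (w.get i) (path i.succ.succ) := by
        rw [fin_iInf_succ]
        exact congr_arg₂ (· ⊓ ·) rfl
          (iInf_congr fun i => by rw [Fin.succ_castSucc] <;> rfl)
      rw [hlast, hsplit, inf_assoc]

private lemma lvfaLang_eq_reach {Q : Type*} (M : LVFA Q A l) (w : List A) :
    lvfaLang M w = ⨆ p ∈ w.foldl (lstep M) (linit M), p.2 ⊓ M.final p.1 := by
  rw [foldl_lstep_eq]
  apply le_antisymm
  · refine iSup_le fun path => ?_
    refine le_trans ?_ (le_iSup _ ((path (Fin.last w.length),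
      M.init (path 0) ⊓ ⨅ i : Fin w.length, M.δ (path i.castSucc) (w.get i) (path i.succ)) : Q × l))
    refine le_trans ?_ (le_iSup _ ⟨path, M.init (path 0), rfl, rfl⟩)
    rw [inf_assoc]
  · refine iSup_le fun p => iSup_le fun hp => ?_
    obtain ⟨path, v, hv, rfl⟩ := hp
    have hv' : v = M.init (path 0) := hv
    refine le_trans ?_ (le_iSup _ path)
    rw [hv', inf_assoc]


open scoped Classical in
private lemma forward_parts {Q : Type} [Fintype Q] [Fintype A] (M : LVFA Q A l) :
    (Set.range (lvfaLang M)).Finite ∧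
      ∀ r : l, Language.IsRegular {w : List A | r ≤ lvfaLang M w} := by
  classical
  set V : Set l := Set.range (fun x : Q × A × Q => M.δ x.1 x.2.1 x.2.2) ∪ Set.range M.init
    with hV
  have hVfin : V.Finite := (Set.finite_range _).union (Set.finite_range _)
  set T : Set l := sInf '' {s : Set l | s ⊆ V} with hT
  have hTfin : T.Finite := (Set.Finite.finite_subsets hVfin).image _
  have hinitT : ∀ q, M.init q ∈ T := by
    intro q
    refine ⟨{M.init q}, ?_, sInf_singleton⟩
    intro x hx
    rw [Set.mem_singleton_iff] at hx
    rw [hx, hV]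
    exact Or.inr ⟨q, rfl⟩
  have hclose : ∀ v ∈ T, ∀ (q : Q) (a : A) (q' : Q), v ⊓ M.δ q a q' ∈ T := by
    rintro v ⟨s, hs, rfl⟩ q a q'
    refine ⟨insert (M.δ q a q') s, ?_, by rw [sInf_insert, inf_comm]⟩
    exact Set.insert_subset (Or.inl ⟨(q, a, q'), rfl⟩) hs
  have hlinitT : ∀ p ∈ linit M, (p : Q × l).2 ∈ T := by
    intro p hp
    rw [show (p : Q × l).2 = M.init p.1 from hp]
    exact hinitT p.1
  have hinv : ∀ (w : List A) (S : Set (Q × l)), (∀ p ∈ S, (p : Q × l).2 ∈ T) →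
      ∀ p ∈ w.foldl (lstep M) S, (p : Q × l).2 ∈ T := by
    intro w
    induction w with
    | nil => exact fun S h => h
    | cons a w ih =>
      intro S h
      refine ih _ ?_
      rintro p ⟨x, hx, hpv⟩
      rw [hpv]
      exact hclose _ (h x hx) _ _ _
  constructor
  · have himgfin : ((fun x : l × Q => x.1 ⊓ M.final x.2) '' (T ×ˢ Set.univ)).Finite :=
      (hTfin.prod Set.finite_univ).image _
    refine Set.Finite.subset ((Set.Finite.finite_subsets himgfin).image sSup) ?_
    rintro _ ⟨w, rfl⟩
    refine ⟨(fun p : Q × l => p.2 ⊓ M.final p.1) '' (w.foldl (lstep M) (linit M)), ?_, ?_⟩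
    · rintro _ ⟨p, hp, rfl⟩
      exact ⟨(p.2, p.1), ⟨hinv w _ hlinitT p hp, trivial⟩, rfl⟩
    · rw [sSup_image, lvfaLang_eq_reach]
  · intro r
    haveI : Fintype ↥T := hTfin.fintype
    set t := Fintype.card ↥T with ht
    set e : Fin t ≃ ↥T := (Fintype.equivFin ↥T).symm with he
    set σ := Set (Q × Fin t) with hσ
    haveI : Fintype σ := by infer_instance
    set dfa : DFA A σ :=
      { step := fun s a => {p | ∃ x ∈ s, ((e p.2 : l)) = (e x.2 : l) ⊓ M.δ x.1 a p.1}
        start := {p | (e p.2 : l) = M.init p.1}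
        accept := {s | r ≤ ⨆ p ∈ s, (e p.2 : l) ⊓ M.final p.1} } with hdfa
    set π : σ → Set (Q × l) := fun s => (fun x : Q × Fin t => (x.1, (e x.2 : l))) '' s with hπ
    have hπstart : π dfa.start = linit M := by
      apply Set.Subset.antisymm
      · rintro _ ⟨x, hx, rfl⟩
        exact hx
      · intro p hp
        have hpT : (p : Q × l).2 ∈ T := hlinitT p hp
        refine ⟨(p.1, e.symm ⟨p.2, hpT⟩), ?_, ?_⟩
        · show (e (e.symm ⟨p.2, hpT⟩) : l) = M.init p.1
          rw [Equiv.apply_symm_apply]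
          exact hp
        · show (p.1, (e (e.symm ⟨p.2, hpT⟩) : l)) = p
          rw [Equiv.apply_symm_apply]
    have hπstep : ∀ (s : σ) (a : A), π (dfa.step s a) = lstep M (π s) a := by
      intro s a
      apply Set.Subset.antisymm
      · rintro _ ⟨x, hx, rfl⟩
        obtain ⟨y, hy, hxy⟩ := hx
        exact ⟨(y.1, (e y.2 : l)), ⟨y, hy, rfl⟩, hxy⟩
      · rintro p ⟨x, hxmem, hpv⟩
        obtain ⟨y, hy, rfl⟩ := hxmem
        have hpT : (p : Q × l).2 ∈ T := by
          rw [hpv]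
          exact hclose _ (e y.2).2 _ _ _
        refine ⟨(p.1, e.symm ⟨p.2, hpT⟩), ⟨y, hy, ?_⟩, ?_⟩
        · rw [Equiv.apply_symm_apply]
          exact hpv
        · show (p.1, (e (e.symm ⟨p.2, hpT⟩) : l)) = p
          rw [Equiv.apply_symm_apply]
    have hfold : ∀ (w : List A) (s : σ), π (w.foldl dfa.step s) = w.foldl (lstep M) (π s) := by
      intro w
      induction w with
      | nil => intro s; rfl
      | cons a w ih => intro s; rw [List.foldl_cons, List.foldl_cons, ih, hπstep]
    have hsup : ∀ s : σ, (⨆ p ∈ π s, (p : Q × l).2 ⊓ M.final p.1)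
        = ⨆ p ∈ s, (e (p : Q × Fin t).2 : l) ⊓ M.final p.1 := by
      intro s
      rw [hπ]
      exact iSup_image
    refine ⟨σ, inferInstance, dfa, ?_⟩
    ext w
    show dfa.eval w ∈ dfa.accept ↔ r ≤ lvfaLang M w
    have heval : dfa.eval w = w.foldl dfa.step dfa.start := rfl
    have : lvfaLang M w = ⨆ p ∈ dfa.eval w, (e (p : Q × Fin t).2 : l) ⊓ M.final p.1 := by
      rw [← hsup, heval, hfold, hπstart, lvfaLang_eq_reach]
    rw [this]
    rfl


private lemma reverse_regular (f : List A → l)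
    (hfin : (Set.range f).Finite)
    (hreg : ∀ r ∈ Set.range f, r ≠ ⊥ → Language.IsRegular {w : List A | r ≤ f w})
    (hdec : ∀ w : List A, f w = ⨆ r ∈ Set.range f, ⨆ _ : r ≠ ⊥, ⨆ _ : r ≤ f w, r) :
    IsLRegular f := by
  classical
  haveI : Finite ↥(Set.range f) := hfin.to_subtype
  set ι := {r : l // r ∈ Set.range f ∧ r ≠ ⊥} with hι
  haveI : Finite ι :=
    @Set.Finite.to_subtype _ {r : l | r ∈ Set.range f ∧ r ≠ ⊥} (hfin.subset fun x hx => hx.1)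
  haveI : Fintype ι := Fintype.ofFinite ι
  set m := Fintype.card ι with hm
  set e : Fin m ≃ ι := (Fintype.equivFin ι).symm with he
  have hex : ∀ j : Fin m, ∃ σ : Type, ∃ _ : Fintype σ, ∃ D : DFA A σ,
      D.accepts = {w : List A | ((e j : ι) : l) ≤ f w} :=
    fun j => hreg _ (e j).2.1 (e j).2.2
  choose Qt instQ D hD using hex
  haveI : ∀ j, Fintype (Qt j) := instQ
  set N : LVDFA (∀ j, Qt j) A l :=
    { next := fun s a j => (D j).step (s j) a
      start := fun j => (D j).start
      final := fun s => ⨆ j, ⨆ _ : s j ∈ (D j).accept, ((e j : ι) : l) } with hN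
  have hfold : ∀ (w : List A) (s : ∀ j, Qt j) (j : Fin m),
      (w.foldl N.next s) j = w.foldl (D j).step (s j) := by
    intro w
    induction w with
    | nil => intro s j; rfl
    | cons a w ih => intro s j; rw [List.foldl_cons, List.foldl_cons]; exact ih _ j
  refine ⟨∀ j, Qt j, inferInstance, N.toLVFA, fun w => ?_⟩
  rw [lvdfa_toLVFA_lang]
  show N.final (w.foldl N.next N.start) = f w
  have hmem : ∀ j : Fin m,
      ((w.foldl N.next N.start) j ∈ (D j).accept) ↔ ((e j : ι) : l) ≤ f w := by
    intro j
    rw [hfold]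
    have h1 : w ∈ (D j).accepts ↔ w.foldl (D j).step ((fun j => (D j).start) j) ∈ (D j).accept :=
      Iff.rfl
    rw [← h1, hD j]
    try exact Iff.rfl
  show (⨆ j, ⨆ _ : (w.foldl N.next N.start) j ∈ (D j).accept, ((e j : ι) : l)) = f w
  apply le_antisymm
  · exact iSup_le fun j => iSup_le fun hj => (hmem j).1 hj
  · conv_lhs => rw [hdec w]
    refine iSup_le fun r => iSup_le fun hr => iSup_le fun hne => iSup_le fun hle => ?_
    set j := e.symm ⟨r, hr, hne⟩ with hj
    refine le_trans ?_ (le_iSup _ j)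
    have hrj : ((e j : ι) : l) = r := by rw [hj, Equiv.apply_symm_apply]
    have hcond : (w.foldl N.next N.start) j ∈ (D j).accept := (hmem j).2 (le_of_eq_of_le hrj hle)
    refine le_trans (le_of_eq hrj.symm) ?_
    exact le_iSup (fun _ : (w.foldl N.next N.start) j ∈ (D j).accept => ((e j : ι) : l)) hcond

private lemma decomp_trivial (f : List A → l) (w : List A) :
    f w = ⨆ r ∈ Set.range f, ⨆ _ : r ≠ ⊥, ⨆ _ : r ≤ f w, r := by
  apply le_antisymm
  · by_cases hb : f w = ⊥
    · rw [hb]; exact bot_le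
    · refine le_trans ?_ (le_iSup _ (f w))
      refine le_trans ?_ (le_iSup _ ⟨w, rfl⟩)
      refine le_trans ?_ (le_iSup _ hb)
      exact le_iSup (fun _ : f w ≤ f w => f w) le_rfl
  · exact iSup_le fun r => iSup_le fun _ => iSup_le fun _ => iSup_le fun h => h

end Aux

/-- Cut characterization of `l`-regular languages. -/
theorem lregular_iff_cuts {l A : Type*} [OrthomodularCompleteLattice l] [Fintype A]
    (f : List A → l) :
    IsLRegular f ↔
      (Set.range f).Finite ∧
      (∀ r ∈ Set.range f, r ≠ ⊥ → Language.IsRegular {w : List A | r ≤ f w}) ∧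
      ∀ w : List A, f w = ⨆ r ∈ Set.range f, ⨆ _ : r ≠ ⊥, ⨆ _ : r ≤ f w, r := by
  constructor
  · rintro ⟨Q, instQ, M, hM⟩
    haveI := instQ
    have hfeq : f = lvfaLang M := funext fun w => (hM w).symm
    obtain ⟨h1, h2⟩ := forward_parts M
    refine ⟨by rw [hfeq]; exact h1, ?_, fun w => decomp_trivial f w⟩
    intro r _ _
    rw [hfeq]
    exact h2 r
  · rintro ⟨hfin, hreg, hdec⟩
    exact reverse_regular f hfin hreg hdec
end

section
/- If A and B are l-regular languages over Σ, then their union A ∨ B, defined by (A ∨ B)(ω) = A(ω) ∨ B(ω), is an l-regular language. -/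
/-- Disjoint-union automaton. -/
def sumLVFA {Q₁ Q₂ A l : Type*} [OrthomodularCompleteLattice l]
    (M₁ : LVFA Q₁ A l) (M₂ : LVFA Q₂ A l) : LVFA (Q₁ ⊕ Q₂) A l where
  δ x a y := match x, y with
    | .inl q, .inl q' => M₁.δ q a q'
    | .inr q, .inr q' => M₂.δ q a q'
    | _, _ => ⊥
  init := Sum.elim M₁.init M₂.init
  final := Sum.elim M₁.final M₂.final

section
variable {Q₁ Q₂ A l : Type*} [OrthomodularCompleteLattice l]
  (M₁ : LVFA Q₁ A l) (M₂ : LVFA Q₂ A l)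

@[simp] lemma sumLVFA_δ_inl_inl (q q' : Q₁) (a : A) :
    (sumLVFA M₁ M₂).δ (.inl q) a (.inl q') = M₁.δ q a q' := rfl
@[simp] lemma sumLVFA_δ_inr_inr (q q' : Q₂) (a : A) :
    (sumLVFA M₁ M₂).δ (.inr q) a (.inr q') = M₂.δ q a q' := rfl
@[simp] lemma sumLVFA_δ_inl_inr (q : Q₁) (q' : Q₂) (a : A) :
    (sumLVFA M₁ M₂).δ (.inl q) a (.inr q') = ⊥ := rfl
@[simp] lemma sumLVFA_δ_inr_inl (q : Q₂) (q' : Q₁) (a : A) :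
    (sumLVFA M₁ M₂).δ (.inr q) a (.inl q') = ⊥ := rfl
@[simp] lemma sumLVFA_init_inl (q : Q₁) :
    (sumLVFA M₁ M₂).init (.inl q) = M₁.init q := rfl
@[simp] lemma sumLVFA_init_inr (q : Q₂) :
    (sumLVFA M₁ M₂).init (.inr q) = M₂.init q := rfl
@[simp] lemma sumLVFA_final_inl (q : Q₁) :
    (sumLVFA M₁ M₂).final (.inl q) = M₁.final q := rfl
@[simp] lemma sumLVFA_final_inr (q : Q₂) :
    (sumLVFA M₁ M₂).final (.inr q) = M₂.final q := rfl
end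

lemma fin_const_of_adjacent {n : ℕ} (f : Fin (n + 1) → Bool)
    (h : ∀ i : Fin n, f i.castSucc = f i.succ) : ∀ k, f k = f 0 := by
  intro k
  induction k using Fin.induction with
  | zero => rfl
  | succ i ih => rw [← h i]; exact ih

/-- `l`-regular languages are closed under union. -/
theorem lregular_union {l A : Type*} [OrthomodularCompleteLattice l] [Fintype A]
    (f g : List A → l) (hf : IsLRegular f) (hg : IsLRegular g) :
    IsLRegular (fun w => f w ⊔ g w) := by
  obtain ⟨Q₁, i₁, M₁, h₁⟩ := hf
  obtain ⟨Q₂, i₂, M₂, h₂⟩ := hg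
  refine ⟨Q₁ ⊕ Q₂, inferInstance, sumLVFA M₁ M₂, fun w => ?_⟩
  show lvfaLang (sumLVFA M₁ M₂) w = f w ⊔ g w
  rw [← h₁ w, ← h₂ w]
  simp only [lvfaLang]
  apply le_antisymm
  · apply iSup_le; intro p
    by_cases hc : ∃ i : Fin w.length, (p i.castSucc).isLeft ≠ (p i.succ).isLeft
    · obtain ⟨i, hi⟩ := hc
      have hbot : (sumLVFA M₁ M₂).δ (p i.castSucc) (w.get i) (p i.succ) = ⊥ := by
        rcases hx : p i.castSucc with q | q <;> rcases hy : p i.succ with q' | q' <;>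
          rw [hx, hy] at hi <;> simp at hi ⊢
      exact le_trans (le_trans inf_le_left inf_le_right)
        (le_trans ((iInf_le _ i).trans_eq hbot) bot_le)
    · push_neg at hc
      have hconst : ∀ k, (p k).isLeft = (p 0).isLeft :=
        fin_const_of_adjacent _ hc
      cases hl : (p 0).isLeft with
      | true =>
        have hall : ∀ k, ∃ q, p k = Sum.inl q := by
          intro k
          have := (hconst k).trans hl
          exact Sum.isLeft_iff.mp this
        choose p₁ hp₁ using hall
        refine le_trans ?_ le_sup_left
        refine le_trans ?_ (le_iSup _ p₁)
        simp only [hp₁, sumLVFA_δ_inl_inl, sumLVFA_init_inl, sumLVFA_final_inl, le_refl]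
      | false =>
        have hall : ∀ k, ∃ q, p k = Sum.inr q := by
          intro k
          have : (p k).isLeft = false := (hconst k).trans hl
          exact Sum.isRight_iff.mp (by simpa [Sum.not_isLeft] using this)
        choose p₂ hp₂ using hall
        refine le_trans ?_ le_sup_right
        refine le_trans ?_ (le_iSup _ p₂)
        simp only [hp₂, sumLVFA_δ_inr_inr, sumLVFA_init_inr, sumLVFA_final_inr, le_refl]
  · apply sup_le
    · apply iSup_le; intro p₁
      refine le_trans ?_ (le_iSup _ (fun k => Sum.inl (p₁ k)))
      simp
    · apply iSup_le; intro p₂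
      refine le_trans ?_ (le_iSup _ (fun k => Sum.inr (p₂ k)))
      simp
end
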